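/- Let C be an abelian category with enough projectives and enough injectives, in which every projective object is injective. Let X, Y be objects of C, let f : X ⟶ Y be a morphism, and let i : X ⟶ P be a monomorphism with P projective. Define f₀ : X ⟶ P ⊕ Y to be the morphism with components (i, f), and f₁ : P ⊕ Y ⟶ Y the projection to the second summand. Then: (1) f₀ is a monomorphism, f₁ is a stable equivalence, and f = f₁ ∘ f₀; and (2) the pushout P ⊔_X (P ⊕ Y) of f₀ along i is stably equivalent to the pushout P ⊔_X Y of f along i, via the map induced by f₁. -/

import Mathlib

open CategoryTheory Limits

universe v u

/-- A morphism factors through a projective object. -/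
def FactorsThroughProjective {C : Type u} [Category.{v} C]
    {X Y : C} (f : X ⟶ Y) : Prop :=
  ∃ (P : C) (_ : Projective P) (g : X ⟶ P) (h : P ⟶ Y), g ≫ h = f

/-- A morphism `f : X ⟶ Y` is a stable equivalence if there is `h : Y ⟶ X`
such that `h ∘ f` is stably equivalent to `id_X` and `f ∘ h` is stably
equivalent to `id_Y`. -/
def IsStableEquiv {C : Type u} [Category.{v} C] [Preadditive C]
    {X Y : C} (f : X ⟶ Y) : Prop :=
  ∃ h : Y ⟶ X, FactorsThroughProjective (f ≫ h - 𝟙 X) ∧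
    FactorsThroughProjective (h ≫ f - 𝟙 Y)

/-- simple pushouts.  Let `C` be an abelian category with
enough projectives and enough injectives in which every projective object is
injective.  Let `f : X ⟶ Y` be a morphism and `i : X ⟶ P` a monomorphism with
`P` projective.  Let `f₀ = (i, f) : X ⟶ P ⊞ Y` and `f₁ : P ⊞ Y ⟶ Y` the
projection to the second summand.  Then `f₀` is a monomorphism, `f₁` is a
stable equivalence, `f = f₁ ∘ f₀`, and the induced map of pushouts
`P ⊔_X (P ⊞ Y) ⟶ P ⊔_X Y` (of `f₀`, resp. `f`, along `i`, induced by `f₁`)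
is a stable equivalence. -/
theorem simple_pushouts
    {C : Type u} [Category.{v} C] [Abelian C] [EnoughProjectives C]
    [EnoughInjectives C]
    (hPI : ∀ P : C, Projective P → Injective P)
    {X Y P : C} (hP : Projective P) (f : X ⟶ Y) (i : X ⟶ P) [Mono i] :
    Mono (biprod.lift i f) ∧
    IsStableEquiv (biprod.snd : P ⊞ Y ⟶ Y) ∧
    biprod.lift i f ≫ biprod.snd = f ∧
    IsStableEquiv (pushout.map i (biprod.lift i f) i f (𝟙 P)
      (biprod.snd : P ⊞ Y ⟶ Y) (𝟙 X) (by simp) (by simp)) := by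
  have hlift : biprod.lift i f = i ≫ biprod.inl + f ≫ biprod.inr := by
    apply biprod.hom_ext <;> simp
  refine ⟨?_, ⟨biprod.inr, ⟨P, hP, -biprod.fst, biprod.inl, ?_⟩,
      ⟨P, hP, 0, 0, by simp⟩⟩, by simp, ?_⟩
  · have h1 : Mono (biprod.lift i f ≫ biprod.fst) := by simpa using ‹Mono i›
    exact mono_of_mono _ biprod.fst
  · have := biprod.total (X := P) (Y := Y)
    simp only [Preadditive.neg_comp]
    rw [← this]
    abel
  · -- part 4
    have comm : i ≫ (pushout.inl i (biprod.lift i f)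
        - biprod.inl ≫ pushout.inr i (biprod.lift i f))
        = f ≫ (biprod.inr ≫ pushout.inr i (biprod.lift i f)) := by
      rw [Preadditive.comp_sub, pushout.condition, hlift]
      simp [Preadditive.add_comp]
    refine ⟨pushout.desc _ _ comm, ⟨P, hP,
      -(pushout.desc (𝟙 P) biprod.fst (by simp)),
      biprod.inl ≫ pushout.inr i (biprod.lift i f), ?_⟩,
      ⟨P, hP, 0, 0, ?_⟩⟩
    · apply pushout.hom_ext
      · rw [Preadditive.neg_comp, Preadditive.comp_neg, pushout.inl_desc_assoc, Preadditive.comp_sub, pushout.inl_desc_assoc]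
        simp only [Category.id_comp, Category.assoc]
        rw [pushout.inl_desc]
        simp
      · simp only [Preadditive.neg_comp, Preadditive.comp_neg, Category.assoc,
          pushout.inr_desc, Preadditive.comp_sub, Preadditive.sub_comp,
          pushout.inl_desc, Category.comp_id, Category.id_comp]
        simp only [pushout.inl_desc_assoc, pushout.inr_desc_assoc,
          pushout.inl_desc, pushout.inr_desc,
          Category.assoc, Category.id_comp, Category.comp_id]
        nth_rewrite 3 [← Category.id_comp (pushout.inr i (biprod.lift i f))]
        rw [← biprod.total]
        simp only [Preadditive.add_comp, Category.assoc]
        abel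
    · rw [zero_comp]
      symm
      rw [sub_eq_zero]
      apply pushout.hom_ext
      · rw [pushout.inl_desc_assoc, Preadditive.sub_comp, pushout.inl_desc, Category.assoc, pushout.inr_desc]
        simp
      · rw [pushout.inr_desc_assoc, Category.assoc, pushout.inr_desc]
        simp
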